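/- Let k, q, d ∈ ℂ and let I ⊆ F be the two-sided ideal generated by the three elements x₂x₁ − x₁x₂ − k x₁², x₃x₁ − x₁x₃ − q x₁², and x₃x₂ − x₂x₃ + k x₁x₃ − q x₁x₂ − (d + qk) x₁². Then the images in F/I of the monomials x₁^{a₁} x₂^{a₂} x₃^{a₃}, over all a₁, a₂, a₃ ∈ ℕ, form a ℂ-basis of F/I. (This quotient is the Nichols algebra associated to the braiding of type R_{1,7} with t = 1 and a = p − 2q; it has Gelfand–Kirillov dimension 3.) -/

import Mathlib

/-- The free associative unital `ℂ`-algebra on three generators. -/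
abbrev F : Type := FreeAlgebra ℂ (Fin 3)

/-- The generators `x₁ = X 0`, `x₂ = X 1`, `x₃ = X 2`. -/
noncomputable def X (i : Fin 3) : F := FreeAlgebra.ι ℂ i

/-- Generators: `x₂x₁ − x₁x₂ − k x₁²`, `x₃x₁ − x₁x₃ − q x₁²`, `x₃x₂ − x₂x₃ + k x₁x₃ − q x₁x₂ − (d + qk) x₁²`. -/
noncomputable def S (k q d : ℂ) : Set F :=
  {X 1 * X 0 - X 0 * X 1 - k • (X 0 * X 0),
   X 2 * X 0 - X 0 * X 2 - q • (X 0 * X 0),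
   X 2 * X 1 - X 1 * X 2 + k • (X 0 * X 2) - q • (X 0 * X 1) - (d + q * k) • (X 0 * X 0)}

/-- The relation whose two-sided-ideal closure is the ideal generated by `S`;
`RingQuot rel` is the quotient `F/I`. -/
def rel (k q d : ℂ) : F → F → Prop := fun x y => x ∈ S k q d ∧ y = 0

abbrev V : Type := (ℕ × ℕ × ℕ) →₀ ℂ

noncomputable def sgl (p : ℕ × ℕ × ℕ) : V := Finsupp.single p 1

noncomputable def L1 : V →ₗ[ℂ] V :=
  Finsupp.lmapDomain ℂ ℂ (fun p => (p.1 + 1, p.2.1, p.2.2))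

noncomputable def L2 (k : ℂ) : V →ₗ[ℂ] V :=
  Finsupp.linearCombination ℂ
    (fun p => sgl (p.1, p.2.1 + 1, p.2.2) + ((p.1 : ℂ) * k) • sgl (p.1 + 1, p.2.1, p.2.2))

noncomputable def g (k q d : ℂ) : ℕ → ℕ → ℕ → V
  | 0, 0, c => sgl (0, 0, c + 1)
  | 0, b + 1, c => L2 k (g k q d 0 b c) - k • L1 (g k q d 0 b c)
      + q • sgl (1, b + 1, c) + (d + q * k) • sgl (2, b, c)
  | a + 1, b, c => L1 (g k q d a b c) + q • sgl (a + 2, b, c)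

noncomputable def L3 (k q d : ℂ) : V →ₗ[ℂ] V :=
  Finsupp.linearCombination ℂ (fun p => g k q d p.1 p.2.1 p.2.2)

lemma L1_sgl (a b c : ℕ) : L1 (sgl (a, b, c)) = sgl (a + 1, b, c) := by
  simp [L1, sgl, Finsupp.mapDomain_single]

lemma L2_sgl (k : ℂ) (a b c : ℕ) :
    L2 k (sgl (a, b, c)) = sgl (a, b + 1, c) + ((a : ℂ) * k) • sgl (a + 1, b, c) := by
  simp [L2, sgl, Finsupp.linearCombination_single]

lemma L3_sgl (k q d : ℂ) (a b c : ℕ) : L3 k q d (sgl (a, b, c)) = g k q d a b c := by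
  simp [L3, sgl, Finsupp.linearCombination_single]

lemma ext_sgl (f h : V →ₗ[ℂ] V) (H : ∀ p : ℕ × ℕ × ℕ, f (sgl p) = h (sgl p)) : f = h := by
  apply Finsupp.lhom_ext
  intro p r
  have : (Finsupp.single p r : V) = r • sgl p := by
    simp [sgl, Finsupp.smul_single_one]
  rw [this, map_smul, map_smul, H]

lemma g_succ (k q d : ℂ) (a b c : ℕ) :
    g k q d (a + 1) b c = L1 (g k q d a b c) + q • sgl (a + 2, b, c) := by
  rw [g]

lemma g_zero_succ (k q d : ℂ) (b c : ℕ) :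
    g k q d 0 (b + 1) c = L2 k (g k q d 0 b c) - k • L1 (g k q d 0 b c)
      + q • sgl (1, b + 1, c) + (d + q * k) • sgl (2, b, c) := by
  rw [g]

lemma g_zero_zero (k q d : ℂ) (c : ℕ) : g k q d 0 0 c = sgl (0, 0, c + 1) := by
  rw [g]

-- Relation 1 as an operator identity
lemma R1 (k : ℂ) : L2 k ∘ₗ L1 = L1 ∘ₗ L2 k + k • (L1 ∘ₗ L1) := by
  apply ext_sgl
  rintro ⟨a, b, c⟩
  simp only [LinearMap.comp_apply, LinearMap.add_apply, LinearMap.smul_apply,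
    L1_sgl, L2_sgl, map_add, map_smul]
  push_cast
  module

lemma R2 (k q d : ℂ) : L3 k q d ∘ₗ L1 = L1 ∘ₗ L3 k q d + q • (L1 ∘ₗ L1) := by
  apply ext_sgl
  rintro ⟨a, b, c⟩
  simp only [LinearMap.comp_apply, LinearMap.add_apply, LinearMap.smul_apply,
    L1_sgl, L3_sgl, g_succ]

-- Relation 3 on basis vectors
lemma R3aux (k q d : ℂ) : ∀ a b c : ℕ,
    L3 k q d (L2 k (sgl (a, b, c))) =
      L2 k (L3 k q d (sgl (a, b, c))) - k • L1 (L3 k q d (sgl (a, b, c)))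
        + q • L1 (L2 k (sgl (a, b, c))) + (d + q * k) • L1 (L1 (sgl (a, b, c))) := by
  intro a
  induction a with
  | zero =>
    intro b c
    simp only [L2_sgl, L3_sgl, L1_sgl, Nat.cast_zero, zero_mul, zero_smul, add_zero,
      map_add, map_smul, g_zero_succ]
  | succ a ih =>
    intro b c
    have hL2L1 : ∀ v : V, L2 k (L1 v) = L1 (L2 k v) + k • L1 (L1 v) := by
      intro v
      have := congrArg (fun f : V →ₗ[ℂ] V => f v) (R1 k)
      simpa using this
    have hL3L1 : ∀ v : V, L3 k q d (L1 v) = L1 (L3 k q d v) + q • L1 (L1 v) := by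
      intro v
      have := congrArg (fun f : V →ₗ[ℂ] V => f v) (R2 k q d)
      simpa using this
    have key := ih b c
    -- compute both sides
    simp only [L2_sgl, L3_sgl, L1_sgl, map_add, map_smul, g_succ] at key ⊢
    set G := g k q d a b c with hG
    have hg : g k q d a (b + 1) c =
        L2 k G - k • L1 G - ((a : ℂ) * k) • L1 G + q • sgl (a + 1, b + 1, c)
          + (d + q * k) • sgl (a + 2, b, c) := by
      linear_combination (norm := module) key
    rw [hg]
    simp only [map_add, map_sub, map_smul, hL2L1, L1_sgl, L2_sgl]
    simp only [show a+1+1 = a+2 from rfl, show a+2+1 = a+3 from rfl,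
      show a+1+2 = a+3 from rfl, show a+1+1+1 = a+3 from rfl]
    push_cast
    module

-- relation 3 as an operator identity
lemma R3 (k q d : ℂ) :
    L3 k q d ∘ₗ L2 k = L2 k ∘ₗ L3 k q d - k • (L1 ∘ₗ L3 k q d) + q • (L1 ∘ₗ L2 k)
      + (d + q * k) • (L1 ∘ₗ L1) := by
  apply ext_sgl
  rintro ⟨a, b, c⟩
  simpa using R3aux k q d a b c

noncomputable def ρ (k q d : ℂ) : F →ₐ[ℂ] Module.End ℂ V :=
  FreeAlgebra.lift ℂ ![L1, L2 k, L3 k q d]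

lemma ρ_X0 (k q d : ℂ) : ρ k q d (X 0) = L1 := by
  simp [ρ, X, FreeAlgebra.lift_ι_apply]
lemma ρ_X1 (k q d : ℂ) : ρ k q d (X 1) = L2 k := by
  simp [ρ, X, FreeAlgebra.lift_ι_apply]
lemma ρ_X2 (k q d : ℂ) : ρ k q d (X 2) = L3 k q d := by
  simp [ρ, X, FreeAlgebra.lift_ι_apply]

lemma ρ_rel (k q d : ℂ) : ∀ ⦃x y : F⦄, rel k q d x y → ρ k q d x = ρ k q d y := by
  rintro x y ⟨hx, rfl⟩
  rw [map_zero]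
  have e1 : (L2 k * L1 : Module.End ℂ V) = L1 * L2 k + k • (L1 * L1) := R1 k
  have e2 : (L3 k q d * L1 : Module.End ℂ V) = L1 * L3 k q d + q • (L1 * L1) := R2 k q d
  have e3 : (L3 k q d * L2 k : Module.End ℂ V) =
      L2 k * L3 k q d - k • (L1 * L3 k q d) + q • (L1 * L2 k)
        + (d + q * k) • (L1 * L1) := R3 k q d
  rcases hx with rfl | rfl | rfl <;>
    simp only [map_sub, map_add, map_smul, map_mul, ρ_X0, ρ_X1, ρ_X2, e1, e2, e3] <;>
    abel

noncomputable def ρ' (k q d : ℂ) : RingQuot (rel k q d) →ₐ[ℂ] Module.End ℂ V :=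
  RingQuot.liftAlgHom ℂ ⟨ρ k q d, ρ_rel k q d⟩

noncomputable def Φ (k q d : ℂ) : RingQuot (rel k q d) →ₗ[ℂ] V :=
  (LinearMap.applyₗ (sgl (0, 0, 0))).comp (ρ' k q d).toLinearMap

lemma pow_L3 (k q d : ℂ) (c : ℕ) :
    (L3 k q d ^ c : Module.End ℂ V) (sgl (0, 0, 0)) = sgl (0, 0, c) := by
  induction c with
  | zero => simp
  | succ c ih =>
    rw [pow_succ', Module.End.mul_apply, ih]
    simp [L3_sgl, g_zero_zero]

lemma pow_L2 (k : ℂ) (b c : ℕ) :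
    (L2 k ^ b : Module.End ℂ V) (sgl (0, 0, c)) = sgl (0, b, c) := by
  induction b with
  | zero => simp
  | succ b ih =>
    rw [pow_succ', Module.End.mul_apply, ih]
    simp [L2_sgl]

lemma pow_L1 (a b c : ℕ) :
    (L1 ^ a : Module.End ℂ V) (sgl (0, b, c)) = sgl (a, b, c) := by
  induction a with
  | zero => simp
  | succ a ih =>
    rw [pow_succ', Module.End.mul_apply, ih, L1_sgl]

lemma Phi_mono (k q d : ℂ) (e : ℕ × ℕ × ℕ) :
    Φ k q d (RingQuot.mkAlgHom ℂ (rel k q d) (X 0 ^ e.1 * X 1 ^ e.2.1 * X 2 ^ e.2.2))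
      = sgl e := by
  obtain ⟨a, b, c⟩ := e
  simp only [Φ, LinearMap.comp_apply, AlgHom.toLinearMap_apply]
  simp only [LinearMap.coe_mk, AddHom.coe_mk, LinearMap.id_coe, id_eq, LinearMap.applyₗ_apply_apply]
  rw [ρ', RingQuot.liftAlgHom_mkAlgHom_apply]
  simp only [map_mul, map_pow, ρ_X0, ρ_X1, ρ_X2]
  simp only [Module.End.mul_apply, pow_L3, pow_L2, pow_L1]

lemma li_part (k q d : ℂ) :
    LinearIndependent ℂ (fun e : ℕ × ℕ × ℕ =>
      RingQuot.mkAlgHom ℂ (rel k q d) (X 0 ^ e.1 * X 1 ^ e.2.1 * X 2 ^ e.2.2)) := by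
  apply LinearIndependent.of_comp (Φ k q d)
  have : (⇑(Φ k q d) ∘ fun e : ℕ × ℕ × ℕ =>
      RingQuot.mkAlgHom ℂ (rel k q d) (X 0 ^ e.1 * X 1 ^ e.2.1 * X 2 ^ e.2.2))
      = fun e => sgl e := by
    funext e; exact Phi_mono k q d e
  rw [this]
  have := (Finsupp.basisSingleOne (R := ℂ) (ι := ℕ × ℕ × ℕ)).linearIndependent
  simpa [sgl, Finsupp.coe_basisSingleOne] using this

/-! ### Spanning -/

noncomputable def mono (a b c : ℕ) : F := X 0 ^ a * X 1 ^ b * X 2 ^ c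

lemma X0_mul_mono (a b c : ℕ) : X 0 * mono a b c = mono (a + 1) b c := by
  simp [mono, pow_succ', mul_assoc]

lemma X1_mul_mono0 (b c : ℕ) : X 1 * mono 0 b c = mono 0 (b + 1) c := by
  simp [mono, pow_succ', mul_assoc]

lemma X2_mul_mono00 (c : ℕ) : X 2 * mono 0 0 c = mono 0 0 (c + 1) := by
  simp [mono, pow_succ', mul_assoc]

section Span
variable (k q d : ℂ)

local notation "mkQ" => RingQuot.mkAlgHom ℂ (rel k q d)

lemma q1 : mkQ (X 1 * X 0) = mkQ (X 0 * X 1) + k • mkQ (X 0 * X 0) := by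
  have h := RingQuot.mkAlgHom_rel ℂ (s := rel k q d)
    (x := X 1 * X 0 - X 0 * X 1 - k • (X 0 * X 0)) (y := 0) ⟨by left; rfl, rfl⟩
  simp only [map_sub, map_smul, map_zero, sub_eq_zero, sub_eq_iff_eq_add] at h
  linear_combination (norm := module) h

lemma q2 : mkQ (X 2 * X 0) = mkQ (X 0 * X 2) + q • mkQ (X 0 * X 0) := by
  have h := RingQuot.mkAlgHom_rel ℂ (s := rel k q d)
    (x := X 2 * X 0 - X 0 * X 2 - q • (X 0 * X 0)) (y := 0) ⟨by right; left; rfl, rfl⟩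
  simp only [map_sub, map_smul, map_zero] at h
  linear_combination (norm := module) h

lemma q3 : mkQ (X 2 * X 1) = mkQ (X 1 * X 2) - k • mkQ (X 0 * X 2) + q • mkQ (X 0 * X 1)
    + (d + q * k) • mkQ (X 0 * X 0) := by
  have h := RingQuot.mkAlgHom_rel ℂ (s := rel k q d)
    (x := X 2 * X 1 - X 1 * X 2 + k • (X 0 * X 2) - q • (X 0 * X 1)
      - (d + q * k) • (X 0 * X 0)) (y := 0) ⟨by right; right; rfl, rfl⟩
  simp only [map_sub, map_add, map_smul, map_zero] at h
  linear_combination (norm := module) h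

lemma mk_X0_mono (a b c : ℕ) : mkQ (X 0) * mkQ (mono a b c) = mkQ (mono (a + 1) b c) := by
  rw [← map_mul, X0_mul_mono]

lemma mk_X1_mono : ∀ a b c : ℕ, mkQ (X 1) * mkQ (mono a b c)
    = mkQ (mono a (b + 1) c) + ((a : ℂ) * k) • mkQ (mono (a + 1) b c) := by
  intro a
  induction a with
  | zero =>
    intro b c
    rw [← map_mul, X1_mul_mono0]
    simp
  | succ a ih =>
    intro b c
    have h1 : mkQ (X 1) * mkQ (mono (a + 1) b c) = mkQ (X 1 * X 0) * mkQ (mono a b c) := by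
      rw [← X0_mul_mono, ← map_mul, ← map_mul, mul_assoc]
    rw [h1, q1, add_mul, smul_mul_assoc, ← map_mul, ← map_mul, mul_assoc, mul_assoc]
    rw [show X 1 * mono a b c = X 1 * mono a b c from rfl]
    have h2 : mkQ (X 0 * (X 1 * mono a b c)) = mkQ (X 0) * (mkQ (X 1) * mkQ (mono a b c)) := by
      rw [← map_mul, ← map_mul]
    rw [h2, ih, mul_add, mul_smul_comm, mk_X0_mono, mk_X0_mono]
    have h3 : mkQ (X 0 * (X 0 * mono a b c)) = mkQ (mono (a + 2) b c) := by
      rw [X0_mul_mono, X0_mul_mono]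
    rw [h3]
    simp only [show a+1+1 = a+2 from rfl]
    push_cast
    module

noncomputable def Msp : Submodule ℂ (RingQuot (rel k q d)) :=
  Submodule.span ℂ (Set.range (fun e : ℕ × ℕ × ℕ =>
    RingQuot.mkAlgHom ℂ (rel k q d) (X 0 ^ e.1 * X 1 ^ e.2.1 * X 2 ^ e.2.2)))

lemma hm (a b c : ℕ) : mkQ (mono a b c) ∈ Msp k q d :=
  Submodule.subset_span ⟨(a, b, c), rfl⟩

lemma hc0 : ∀ v ∈ Msp k q d, mkQ (X 0) * v ∈ Msp k q d := by
  intro v hv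
  induction hv using Submodule.span_induction with
  | mem x h =>
    obtain ⟨⟨a, b, c⟩, rfl⟩ := h
    show mkQ (X 0) * mkQ (mono a b c) ∈ Msp k q d
    rw [mk_X0_mono]
    exact hm k q d _ _ _
  | zero => simpa using (Msp k q d).zero_mem
  | add x y hx hy ihx ihy => rw [mul_add]; exact (Msp k q d).add_mem ihx ihy
  | smul r x hx ihx => rw [mul_smul_comm]; exact (Msp k q d).smul_mem r ihx

lemma hc1 : ∀ v ∈ Msp k q d, mkQ (X 1) * v ∈ Msp k q d := by
  intro v hv
  induction hv using Submodule.span_induction with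
  | mem x h =>
    obtain ⟨⟨a, b, c⟩, rfl⟩ := h
    show mkQ (X 1) * mkQ (mono a b c) ∈ Msp k q d
    rw [mk_X1_mono]
    exact (Msp k q d).add_mem (hm k q d _ _ _) ((Msp k q d).smul_mem _ (hm k q d _ _ _))
  | zero => simpa using (Msp k q d).zero_mem
  | add x y hx hy ihx ihy => rw [mul_add]; exact (Msp k q d).add_mem ihx ihy
  | smul r x hx ihx => rw [mul_smul_comm]; exact (Msp k q d).smul_mem r ihx

lemma mk_X2_mono : ∀ a b c : ℕ, mkQ (X 2) * mkQ (mono a b c) ∈ Msp k q d := by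
  intro a
  induction a with
  | zero =>
    intro b
    induction b with
    | zero =>
      intro c
      rw [← map_mul, X2_mul_mono00]
      exact hm k q d _ _ _
    | succ b ihb =>
      intro c
      have h1 : mkQ (X 2) * mkQ (mono 0 (b + 1) c) = mkQ (X 2 * X 1) * mkQ (mono 0 b c) := by
        rw [← X1_mul_mono0, ← map_mul, ← map_mul, mul_assoc]
      rw [h1, q3]
      have e1 : mkQ (X 1 * X 2) * mkQ (mono 0 b c)
          = mkQ (X 1) * (mkQ (X 2) * mkQ (mono 0 b c)) := by
        rw [← map_mul, ← map_mul, ← map_mul, mul_assoc]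
      have e2 : mkQ (X 0 * X 2) * mkQ (mono 0 b c)
          = mkQ (X 0) * (mkQ (X 2) * mkQ (mono 0 b c)) := by
        rw [← map_mul, ← map_mul, ← map_mul, mul_assoc]
      have e3 : mkQ (X 0 * X 1) * mkQ (mono 0 b c)
          = mkQ (X 0) * (mkQ (X 1) * mkQ (mono 0 b c)) := by
        rw [← map_mul, ← map_mul, ← map_mul, mul_assoc]
      have e4 : mkQ (X 0 * X 0) * mkQ (mono 0 b c)
          = mkQ (X 0) * (mkQ (X 0) * mkQ (mono 0 b c)) := by
        rw [← map_mul, ← map_mul, ← map_mul, mul_assoc]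
      simp only [sub_mul, add_mul, smul_mul_assoc, e1, e2, e3, e4]
      have m1 : mkQ (X 1) * (mkQ (X 2) * mkQ (mono 0 b c)) ∈ Msp k q d :=
        hc1 k q d _ (ihb c)
      have m2 : mkQ (X 0) * (mkQ (X 2) * mkQ (mono 0 b c)) ∈ Msp k q d :=
        hc0 k q d _ (ihb c)
      have m3 : mkQ (X 0) * (mkQ (X 1) * mkQ (mono 0 b c)) ∈ Msp k q d := by
        apply hc0 k q d
        rw [mk_X1_mono]
        exact (Msp k q d).add_mem (hm k q d _ _ _) ((Msp k q d).smul_mem _ (hm k q d _ _ _))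
      have m4 : mkQ (X 0) * (mkQ (X 0) * mkQ (mono 0 b c)) ∈ Msp k q d := by
        apply hc0 k q d
        rw [mk_X0_mono]
        exact hm k q d _ _ _
      exact (Msp k q d).add_mem ((Msp k q d).add_mem ((Msp k q d).sub_mem m1
        ((Msp k q d).smul_mem _ m2)) ((Msp k q d).smul_mem _ m3)) ((Msp k q d).smul_mem _ m4)
  | succ a iha =>
    intro b c
    have h1 : mkQ (X 2) * mkQ (mono (a + 1) b c) = mkQ (X 2 * X 0) * mkQ (mono a b c) := by
      rw [← X0_mul_mono, ← map_mul, ← map_mul, mul_assoc]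
    rw [h1, q2]
    have e2 : mkQ (X 0 * X 2) * mkQ (mono a b c)
        = mkQ (X 0) * (mkQ (X 2) * mkQ (mono a b c)) := by
      rw [← map_mul, ← map_mul, ← map_mul, mul_assoc]
    have e4 : mkQ (X 0 * X 0) * mkQ (mono a b c)
        = mkQ (X 0) * (mkQ (X 0) * mkQ (mono a b c)) := by
      rw [← map_mul, ← map_mul, ← map_mul, mul_assoc]
    simp only [add_mul, smul_mul_assoc, e2, e4]
    have m2 : mkQ (X 0) * (mkQ (X 2) * mkQ (mono a b c)) ∈ Msp k q d :=
      hc0 k q d _ (iha b c)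
    have m4 : mkQ (X 0) * (mkQ (X 0) * mkQ (mono a b c)) ∈ Msp k q d := by
      apply hc0 k q d
      rw [mk_X0_mono]
      exact hm k q d _ _ _
    exact (Msp k q d).add_mem m2 ((Msp k q d).smul_mem _ m4)

lemma hc2 : ∀ v ∈ Msp k q d, mkQ (X 2) * v ∈ Msp k q d := by
  intro v hv
  induction hv using Submodule.span_induction with
  | mem x h =>
    obtain ⟨⟨a, b, c⟩, rfl⟩ := h
    exact mk_X2_mono k q d a b c
  | zero => simpa using (Msp k q d).zero_mem
  | add x y hx hy ihx ihy => rw [mul_add]; exact (Msp k q d).add_mem ihx ihy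
  | smul r x hx ihx => rw [mul_smul_comm]; exact (Msp k q d).smul_mem r ihx

lemma hcmul : ∀ x : F, ∀ v ∈ Msp k q d, mkQ x * v ∈ Msp k q d := by
  intro x
  induction x using FreeAlgebra.induction with
  | grade0 r =>
    intro v hv
    rw [AlgHom.commutes, ← Algebra.smul_def]
    exact (Msp k q d).smul_mem r hv
  | grade1 i =>
    fin_cases i
    · exact hc0 k q d
    · exact hc1 k q d
    · exact hc2 k q d
  | mul x y ihx ihy =>
    intro v hv
    rw [map_mul, mul_assoc]
    exact ihx _ (ihy _ hv)
  | add x y ihx ihy =>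
    intro v hv
    rw [map_add, add_mul]
    exact (Msp k q d).add_mem (ihx _ hv) (ihy _ hv)

lemma span_part : Msp k q d = ⊤ := by
  rw [eq_top_iff]
  intro z _
  obtain ⟨x, rfl⟩ := RingQuot.mkAlgHom_surjective ℂ (rel k q d) z
  have h1 : (1 : RingQuot (rel k q d)) ∈ Msp k q d := by
    have := hm k q d 0 0 0
    simpa [mono] using this
  have := hcmul k q d x 1 h1
  simpa using this

end Span

/-- the images in `F/I` of the monomials `x₁^{a₁} x₂^{a₂} x₃^{a₃}` form a `ℂ`-basis. -/
theorem basis_R17_t_one (k q d : ℂ) :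
    LinearIndependent ℂ (fun e : ℕ × ℕ × ℕ =>
      RingQuot.mkAlgHom ℂ (rel k q d) (X 0 ^ e.1 * X 1 ^ e.2.1 * X 2 ^ e.2.2)) ∧
    Submodule.span ℂ (Set.range (fun e : ℕ × ℕ × ℕ =>
      RingQuot.mkAlgHom ℂ (rel k q d) (X 0 ^ e.1 * X 1 ^ e.2.1 * X 2 ^ e.2.2))) = ⊤ :=
  ⟨li_part k q d, span_part k q d⟩
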